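/- arXiv:2307.16439 — 4 statements merged into one kernel-verified Lean document; each statement's English description precedes it below -/
import Mathlib

section
/- For every natural number n ≥ 1, there exist constants C, R₀ > 0 such that for all R ≥ R₀, |∫₀^π (1 − e^{−2Rθ/π})ⁿ · sin²θ dθ − π/2 + (π³/4)·(∑_{k=1}^n C(n,k)·(−1)^{k+1}/k³)·(1/R³)| ≤ C/R⁴. -/
open Real Finset

lemma expSinSqInt (b : ℝ) (hb : 0 < b) :
    ∫ θ in (0:ℝ)..π, Real.exp (-b * θ) * Real.sin θ ^ 2
      = 2 * (1 - Real.exp (-b * π)) / (b * (b ^ 2 + 4)) := by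
  have hb4 : b ^ 2 + 4 ≠ 0 := by positivity
  have hbne : b ≠ 0 := ne_of_gt hb
  set F : ℝ → ℝ := fun θ => -Real.exp (-b * θ) / (2 * b)
      - Real.exp (-b * θ) * (2 * Real.sin (2 * θ) - b * Real.cos (2 * θ)) / (2 * (b ^ 2 + 4))
    with hF
  have hderiv : ∀ θ ∈ Set.uIcc (0:ℝ) π, HasDerivAt F (Real.exp (-b * θ) * Real.sin θ ^ 2) θ := by
    intro θ _
    have he : HasDerivAt (fun θ : ℝ => Real.exp (-b * θ)) (Real.exp (-b * θ) * (-b)) θ := by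
      have : HasDerivAt (fun θ : ℝ => -b * θ) (-b) θ := by
        simpa using (hasDerivAt_id θ).const_mul (-b)
      exact this.exp
    have hs : HasDerivAt (fun θ : ℝ => Real.sin (2 * θ)) (Real.cos (2 * θ) * 2) θ := by
      have h2 : HasDerivAt (fun θ : ℝ => 2 * θ) 2 θ := by
        simpa using (hasDerivAt_id θ).const_mul (2:ℝ)
      exact (Real.hasDerivAt_sin (2 * θ)).comp θ h2
    have hc : HasDerivAt (fun θ : ℝ => Real.cos (2 * θ)) (-Real.sin (2 * θ) * 2) θ := by
      have h2 : HasDerivAt (fun θ : ℝ => 2 * θ) 2 θ := by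
        simpa using (hasDerivAt_id θ).const_mul (2:ℝ)
      exact (Real.hasDerivAt_cos (2 * θ)).comp θ h2
    have h1 : HasDerivAt (fun θ : ℝ => -Real.exp (-b * θ) / (2 * b))
        (-(Real.exp (-b * θ) * (-b)) / (2 * b)) θ := (he.neg).div_const _
    have h2 : HasDerivAt
        (fun θ : ℝ => Real.exp (-b * θ) * (2 * Real.sin (2 * θ) - b * Real.cos (2 * θ)) / (2 * (b ^ 2 + 4)))
        ((Real.exp (-b * θ) * (-b) * (2 * Real.sin (2 * θ) - b * Real.cos (2 * θ))
          + Real.exp (-b * θ) * (2 * (Real.cos (2 * θ) * 2) - b * (-Real.sin (2 * θ) * 2)))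
          / (2 * (b ^ 2 + 4))) θ := by
      exact (he.mul (((hs.const_mul 2).sub (hc.const_mul b)))).div_const _
    have := h1.sub h2
    refine this.congr_deriv ?_
    rw [Real.sin_two_mul, Real.cos_two_mul', Real.cos_sq']
    field_simp
    ring
  have hcont : IntervalIntegrable (fun θ => Real.exp (-b * θ) * Real.sin θ ^ 2)
      MeasureTheory.volume 0 π := by
    apply Continuous.intervalIntegrable
    continuity
  rw [intervalIntegral.integral_eq_sub_of_hasDerivAt hderiv hcont]
  simp only [hF]
  norm_num [Real.sin_two_pi, Real.cos_two_pi]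
  field_simp
  ring

lemma errBound (b : ℝ) (hb : 2 ≤ b) :
    |2 * (1 - Real.exp (-b * π)) / (b * (b ^ 2 + 4)) - 2 / b ^ 3| ≤ 5 / b ^ 4 := by
  have hb0 : (0:ℝ) < b := by linarith
  have hpi : (0:ℝ) < π := Real.pi_pos
  have hexp0 : 0 < Real.exp (-b * π) := Real.exp_pos _
  set e := Real.exp (-b * π) with he
  have hexp : e * (b * π) ≤ 1 := by
    have h1 : b * π + 1 ≤ Real.exp (b * π) := Real.add_one_le_exp _
    have h2 : e * Real.exp (b * π) = 1 := by
      rw [he, ← Real.exp_add]; norm_num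
    nlinarith [mul_pos hb0 hpi]
  have heb : e * b ≤ 1 / 3 := by
    nlinarith [Real.pi_gt_three, mul_pos hexp0 hb0]
  have key : 2 * (1 - e) / (b * (b ^ 2 + 4)) - 2 / b ^ 3
      = -((8 + 2 * e * b ^ 2) / (b ^ 3 * (b ^ 2 + 4))) := by
    field_simp
    ring
  rw [key, abs_neg, abs_of_nonneg (by positivity)]
  rw [div_le_div_iff₀ (by positivity) (by positivity)]
  nlinarith [mul_le_mul_of_nonneg_right heb (pow_nonneg hb0.le 5),
    mul_nonneg (sub_nonneg.2 hb) (pow_nonneg hb0.le 4), pow_nonneg hb0.le 3,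
    pow_nonneg hb0.le 4, pow_nonneg hb0.le 5]

/-- Two-term asymptotic of `G(R) = ∫₀^π (1 - e^{-2Rθ/π})ⁿ sin²θ dθ` as `R → +∞`:
`G(R) = π/2 - (π³/4) (∑_{k=1}^n C(n,k) (-1)^{k+1}/k³) R⁻³ + O(R⁻⁴)`. -/
theorem integral_weight_sin_sq_asymp (n : ℕ) (hn : 1 ≤ n) :
    ∃ C R₀ : ℝ, 0 < C ∧ 0 < R₀ ∧ ∀ R : ℝ, R₀ ≤ R →
      |(∫ θ in (0:ℝ)..π, (1 - Real.exp (-2 * R * θ / π)) ^ n * Real.sin θ ^ 2)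
          - π / 2
          + (π ^ 3 / 4) *
            (∑ k ∈ Finset.Icc 1 n, (n.choose k : ℝ) * (-1) ^ (k + 1) / (k : ℝ) ^ 3)
            * (1 / R ^ 3)|
        ≤ C / R ^ 4 := by
  have hpi : (0:ℝ) < π := Real.pi_pos
  refine ⟨2 ^ n * π ^ 4, π, by positivity, hpi, ?_⟩
  intro R hR
  have hR0 : (0:ℝ) < R := lt_of_lt_of_le hpi hR
  -- pointwise binomial expansion
  have hpt : ∀ θ : ℝ, (1 - Real.exp (-2 * R * θ / π)) ^ n * Real.sin θ ^ 2
      = ∑ k ∈ Finset.range (n+1),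
          (n.choose k : ℝ) * (-1) ^ k * (Real.exp (-(2*R*(k:ℝ)/π) * θ) * Real.sin θ ^ 2) := by
    intro θ
    rw [show (1 - Real.exp (-2 * R * θ / π)) = (-Real.exp (-2 * R * θ / π)) + 1 by ring,
      add_pow, Finset.sum_mul]
    refine Finset.sum_congr rfl fun k hk => ?_
    rw [show (-(2*R*(k:ℝ)/π)) * θ = (k:ℝ) * (-2 * R * θ / π) by ring, Real.exp_nat_mul,
      neg_pow]
    ring
  -- integrability of each term
  have hint : ∀ k ∈ Finset.range (n+1), IntervalIntegrable
      (fun θ => (n.choose k : ℝ) * (-1) ^ k * (Real.exp (-(2*R*(k:ℝ)/π) * θ) * Real.sin θ ^ 2))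
      MeasureTheory.volume 0 π := by
    intro k _
    apply Continuous.intervalIntegrable
    continuity
  -- exact value of the integral
  have hsplit : ∀ g : ℕ → ℝ, ∑ k ∈ Finset.range (n+1), g k
      = g 0 + ∑ k ∈ Finset.Icc 1 n, g k := by
    intro g
    rw [Finset.sum_range_succ', show Finset.Icc 1 n = Finset.Ico 1 (n+1) from by
      rw [Finset.Ico_add_one_right_eq_Icc], Finset.sum_Ico_eq_sum_range]
    simp [add_comm]
  have hG : (∫ θ in (0:ℝ)..π, (1 - Real.exp (-2 * R * θ / π)) ^ n * Real.sin θ ^ 2)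
      = π / 2 + ∑ k ∈ Finset.Icc 1 n, (n.choose k : ℝ) * (-1) ^ k
          * (2 * (1 - Real.exp (-(2*R*(k:ℝ)/π) * π)) / ((2*R*(k:ℝ)/π) * ((2*R*(k:ℝ)/π) ^ 2 + 4))) := by
    calc (∫ θ in (0:ℝ)..π, (1 - Real.exp (-2 * R * θ / π)) ^ n * Real.sin θ ^ 2)
        = ∫ θ in (0:ℝ)..π, ∑ k ∈ Finset.range (n+1),
            (n.choose k : ℝ) * (-1) ^ k * (Real.exp (-(2*R*(k:ℝ)/π) * θ) * Real.sin θ ^ 2) := by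
          simp only [hpt]
      _ = ∑ k ∈ Finset.range (n+1), ∫ θ in (0:ℝ)..π,
            (n.choose k : ℝ) * (-1) ^ k * (Real.exp (-(2*R*(k:ℝ)/π) * θ) * Real.sin θ ^ 2) :=
          intervalIntegral.integral_finset_sum hint
      _ = ∑ k ∈ Finset.range (n+1), (n.choose k : ℝ) * (-1) ^ k * ∫ θ in (0:ℝ)..π,
            Real.exp (-(2*R*(k:ℝ)/π) * θ) * Real.sin θ ^ 2 := by
          simp [intervalIntegral.integral_const_mul]
      _ = π / 2 + ∑ k ∈ Finset.Icc 1 n, (n.choose k : ℝ) * (-1) ^ k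
          * (2 * (1 - Real.exp (-(2*R*(k:ℝ)/π) * π)) / ((2*R*(k:ℝ)/π) * ((2*R*(k:ℝ)/π) ^ 2 + 4))) := by
          rw [hsplit]
          congr 1
          · norm_num [integral_sin_sq]
          · refine Finset.sum_congr rfl fun k hk => ?_
            have hk1 : 1 ≤ k := (Finset.mem_Icc.mp hk).1
            have hk0 : (0:ℝ) < (k:ℝ) := by exact_mod_cast hk1
            rw [expSinSqInt (2*R*(k:ℝ)/π) (by positivity)]
  -- rewrite the error as a single sum
  have hE : (∫ θ in (0:ℝ)..π, (1 - Real.exp (-2 * R * θ / π)) ^ n * Real.sin θ ^ 2)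
          - π / 2
          + (π ^ 3 / 4) *
            (∑ k ∈ Finset.Icc 1 n, (n.choose k : ℝ) * (-1) ^ (k + 1) / (k : ℝ) ^ 3)
            * (1 / R ^ 3)
      = ∑ k ∈ Finset.Icc 1 n, (n.choose k : ℝ) * (-1) ^ k
          * (2 * (1 - Real.exp (-(2*R*(k:ℝ)/π) * π)) / ((2*R*(k:ℝ)/π) * ((2*R*(k:ℝ)/π) ^ 2 + 4))
             - 2 / (2*R*(k:ℝ)/π) ^ 3) := by
    rw [hG, Finset.mul_sum, Finset.sum_mul]
    rw [show ∀ a b : ℝ, π / 2 + a - π / 2 + b = a + b from fun a b => by ring,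
      ← Finset.sum_add_distrib]
    refine Finset.sum_congr rfl fun k hk => ?_
    have hk1 : 1 ≤ k := (Finset.mem_Icc.mp hk).1
    have hk0 : (0:ℝ) < (k:ℝ) := by exact_mod_cast hk1
    have hb0 : (0:ℝ) < 2*R*(k:ℝ)/π := by positivity
    field_simp
    ring
  rw [hE]
  -- bound each term
  have hbound : ∀ k ∈ Finset.Icc 1 n,
      |(n.choose k : ℝ) * (-1) ^ k
          * (2 * (1 - Real.exp (-(2*R*(k:ℝ)/π) * π)) / ((2*R*(k:ℝ)/π) * ((2*R*(k:ℝ)/π) ^ 2 + 4))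
             - 2 / (2*R*(k:ℝ)/π) ^ 3)|
        ≤ (n.choose k : ℝ) * (π ^ 4 / R ^ 4) := by
    intro k hk
    have hk1 : 1 ≤ k := (Finset.mem_Icc.mp hk).1
    have hk0 : (1:ℝ) ≤ (k:ℝ) := by exact_mod_cast hk1
    have hb2 : (2:ℝ) ≤ 2*R*(k:ℝ)/π := by
      rw [le_div_iff₀ hpi]
      nlinarith
    have hb0 : (0:ℝ) < 2*R*(k:ℝ)/π := by linarith
    have herr := errBound (2*R*(k:ℝ)/π) hb2
    rw [abs_mul, abs_mul, abs_pow, abs_neg, abs_one, one_pow, mul_one,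
      Nat.abs_cast]
    apply mul_le_mul_of_nonneg_left _ (Nat.cast_nonneg _)
    refine herr.trans ?_
    -- 5 / b^4 ≤ π^4 / R^4
    rw [div_le_div_iff₀ (by positivity) (by positivity)]
    have hbp : (2*R*(k:ℝ)/π) ^ 4 * π ^ 4 = 16 * R ^ 4 * (k:ℝ) ^ 4 := by
      field_simp
      ring
    have hk2 : (1:ℝ) ≤ (k:ℝ) ^ 2 := by nlinarith
    have hk4 : (1:ℝ) ≤ (k:ℝ) ^ 4 := by nlinarith
    have hR4 : (0:ℝ) < R ^ 4 := by positivity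
    calc (5:ℝ) * R ^ 4 ≤ 16 * R ^ 4 * (k:ℝ) ^ 4 := by nlinarith
      _ = π ^ 4 * (2*R*(k:ℝ)/π) ^ 4 := by rw [← hbp]; ring
  calc |∑ k ∈ Finset.Icc 1 n, (n.choose k : ℝ) * (-1) ^ k
          * (2 * (1 - Real.exp (-(2*R*(k:ℝ)/π) * π)) / ((2*R*(k:ℝ)/π) * ((2*R*(k:ℝ)/π) ^ 2 + 4))
             - 2 / (2*R*(k:ℝ)/π) ^ 3)|
      ≤ ∑ k ∈ Finset.Icc 1 n, |(n.choose k : ℝ) * (-1) ^ k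
          * (2 * (1 - Real.exp (-(2*R*(k:ℝ)/π) * π)) / ((2*R*(k:ℝ)/π) * ((2*R*(k:ℝ)/π) ^ 2 + 4))
             - 2 / (2*R*(k:ℝ)/π) ^ 3)| := Finset.abs_sum_le_sum_abs _ _
    _ ≤ ∑ k ∈ Finset.Icc 1 n, (n.choose k : ℝ) * (π ^ 4 / R ^ 4) :=
        Finset.sum_le_sum hbound
    _ = (∑ k ∈ Finset.Icc 1 n, (n.choose k : ℝ)) * (π ^ 4 / R ^ 4) :=
        (Finset.sum_mul _ _ _).symm
    _ ≤ (2:ℝ) ^ n * (π ^ 4 / R ^ 4) := by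
        apply mul_le_mul_of_nonneg_right _ (by positivity)
        have h1 : ∑ k ∈ Finset.Icc 1 n, n.choose k ≤ ∑ k ∈ Finset.range (n+1), n.choose k := by
          apply Finset.sum_le_sum_of_subset
          intro x hx
          simp only [Finset.mem_Icc] at hx
          simp [Finset.mem_range]
          omega
        rw [Nat.sum_range_choose] at h1
        calc (∑ k ∈ Finset.Icc 1 n, (n.choose k : ℝ))
            = ((∑ k ∈ Finset.Icc 1 n, n.choose k : ℕ) : ℝ) := by push_cast; ring
          _ ≤ ((2^n : ℕ) : ℝ) := by exact_mod_cast h1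
          _ = (2:ℝ) ^ n := by push_cast; ring
    _ = 2 ^ n * π ^ 4 / R ^ 4 := by ring
end

section
/- Let n ≥ 1 be a natural number. In hyperbolic space H^{n+1} with metric dt² + sinh²t·g_{S^n} (polar coordinates around a point p), the Rayleigh quotient of the radial test function f(t) = e^{−nt/2}·sin(πt/R) on the geodesic ball B(p,R) satisfies ∫_{B(p,R)} |∇f|² / ∫_{B(p,R)} f² ≤ n²/4 + π²/R² + O(R⁻³) as R → +∞. Consequently λ₁(B(p,R)) ≤ n²/4 + π²/R² + O(R⁻³). -/
open Real
set_option maxHeartbeats 1000000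

/-- The Rayleigh quotient of `f(t) = e^{-nt/2} sin(πt/R)` on the geodesic ball `B(p,R)` in
hyperbolic space `H^{n+1}` (metric `dt² + sinh²t g_S`): after factoring out the volume of the
unit sphere and `e^{-nt}`-normalizing, it equals
`(∫₀^R (1-e^{-2t})ⁿ (-(n/2) sin(πt/R) + (π/R) cos(πt/R))² dt) / (∫₀^R (1-e^{-2t})ⁿ sin²(πt/R) dt)`. -/
lemma hypAux_int_sin_sq (R : ℝ) (hR : 0 < R) :
    ∫ t in (0:ℝ)..R, sin (π*t/R)^2 = R/2 := by
  have h : ∀ t:ℝ, π*t/R = (π/R)*t := fun t => by ring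
  have hc : (π/R) ≠ 0 := by positivity
  simp only [h]
  rw [intervalIntegral.integral_comp_mul_left (fun x => sin x ^2) hc]
  rw [mul_zero, div_mul_cancel₀ _ hR.ne', integral_sin_sq]
  simp [smul_eq_mul]
  field_simp

lemma hypAux_int_cos_sq (R : ℝ) (hR : 0 < R) :
    ∫ t in (0:ℝ)..R, cos (π*t/R)^2 = R/2 := by
  have h : ∀ t:ℝ, π*t/R = (π/R)*t := fun t => by ring
  have hc : (π/R) ≠ 0 := by positivity
  simp only [h]
  rw [intervalIntegral.integral_comp_mul_left (fun x => cos x ^2) hc]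
  rw [mul_zero, div_mul_cancel₀ _ hR.ne', integral_cos_sq]
  simp [smul_eq_mul]
  field_simp

lemma hypAux_int_sin_cos (R : ℝ) (hR : 0 < R) :
    ∫ t in (0:ℝ)..R, sin (π*t/R) * cos (π*t/R) = 0 := by
  have key : ∀ t ∈ Set.uIcc (0:ℝ) R, HasDerivAt (fun u => sin (π*u/R)^2 * (R/(2*π)))
      (sin (π*t/R) * cos (π*t/R)) t := by
    intro t _
    have h1 : HasDerivAt (fun u : ℝ => π*u/R) (π/R) t := by
      simpa using ((hasDerivAt_id t).const_mul π).div_const R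
    have h2 : HasDerivAt (fun u => sin (π*u/R)) (cos (π*t/R) * (π/R)) t :=
      (Real.hasDerivAt_sin _).comp t h1
    have h3 := ((h2.pow 2).mul_const (R/(2*π)))
    refine h3.congr_deriv ?_
    have : π ≠ 0 := pi_ne_zero
    field_simp
    ring
  rw [intervalIntegral.integral_eq_sub_of_hasDerivAt key (by
    apply Continuous.intervalIntegrable; continuity)]
  simp [mul_div_cancel_left₀, hR.ne']

lemma hypAux_int_exp (R : ℝ) :
    ∫ t in (0:ℝ)..R, exp (-2*t) ≤ 1/2 := by
  have key : ∀ t ∈ Set.uIcc (0:ℝ) R, HasDerivAt (fun u => -exp (-2*u)/2) (exp (-2*t)) t := by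
    intro t _
    have h1 : HasDerivAt (fun u : ℝ => -2*u) (-2) t := by
      simpa using (hasDerivAt_id t).const_mul (-2 : ℝ)
    have := ((Real.hasDerivAt_exp _).comp t h1).neg.div_const 2
    refine this.congr_deriv ?_
    ring
  rw [intervalIntegral.integral_eq_sub_of_hasDerivAt key (by
    apply Continuous.intervalIntegrable; continuity)]
  have := Real.exp_pos (-2*R)
  simp only [mul_zero, Real.exp_zero]
  linarith

lemma hypAux_int_t_exp (R : ℝ) (hR : 0 ≤ R) :
    ∫ t in (0:ℝ)..R, t * exp (-2*t) ≤ 1/4 := by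
  have key : ∀ t ∈ Set.uIcc (0:ℝ) R,
      HasDerivAt (fun u => -(u/2 + 1/4) * exp (-2*u)) (t * exp (-2*t)) t := by
    intro t _
    have h1 : HasDerivAt (fun u : ℝ => -2*u) (-2) t := by
      simpa using (hasDerivAt_id t).const_mul (-2 : ℝ)
    have he : HasDerivAt (fun u : ℝ => exp (-2*u)) (exp (-2*t) * (-2)) t :=
      (Real.hasDerivAt_exp _).comp t h1
    have hp : HasDerivAt (fun u : ℝ => -(u/2 + 1/4)) (-(1/2)) t := by
      exact (((hasDerivAt_id t).div_const 2).add_const (1/4:ℝ)).neg.congr_deriv (by norm_num)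
    have := hp.mul he
    refine this.congr_deriv ?_
    ring
  rw [intervalIntegral.integral_eq_sub_of_hasDerivAt key (by
    apply Continuous.intervalIntegrable; continuity)]
  have h1 := Real.exp_pos (-2*R)
  have h2 : 0 ≤ (R/2 + 1/4) * exp (-2*R) := by positivity
  simp only [mul_zero, Real.exp_zero]
  nlinarith


noncomputable def hypRayleigh (n : ℕ) (R : ℝ) : ℝ :=
  (∫ t in (0:ℝ)..R, (1 - Real.exp (-2 * t)) ^ n *
      (-((n : ℝ) / 2) * Real.sin (π * t / R) + (π / R) * Real.cos (π * t / R)) ^ 2) /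
  (∫ t in (0:ℝ)..R, (1 - Real.exp (-2 * t)) ^ n * Real.sin (π * t / R) ^ 2)

lemma hypAux_main (n : ℕ) (hn : 1 ≤ n) (R : ℝ) (hRR : 2*(n:ℝ) ≤ R) :
    hypRayleigh n R ≤ (n : ℝ) ^ 2 / 4 + π ^ 2 / R ^ 2 + (π^2*(n:ℝ)*((n:ℝ)+2)) / R ^ 3 := by
  have hn1 : (1:ℝ) ≤ (n:ℝ) := by exact_mod_cast hn
  have hR : (0:ℝ) < R := by linarith
  have hR0 : (0:ℝ) ≤ R := hR.le
  -- abbreviations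
  set c := ∫ t in (0:ℝ)..R, (1 - (1 - exp (-2*t))^n) * sin (π*t/R)^2 with hc_def
  set a := ∫ t in (0:ℝ)..R, (1 - (1 - exp (-2*t))^n) * cos (π*t/R)^2 with ha_def
  set b := ∫ t in (0:ℝ)..R, (1 - (1 - exp (-2*t))^n) * (sin (π*t/R) * cos (π*t/R)) with hb_def
  -- integrability of everything continuous
  have ii : ∀ f : ℝ → ℝ, Continuous f → IntervalIntegrable f MeasureTheory.volume 0 R :=
    fun f hf => hf.intervalIntegrable 0 R
  -- pointwise facts on [0,R]
  have hphi0 : ∀ t ∈ Set.Icc (0:ℝ) R, 0 ≤ 1 - (1 - exp (-2*t))^n := by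
    intro t ht
    have he1 : exp (-2*t) ≤ 1 := by
      rw [← Real.exp_zero]; exact Real.exp_le_exp.mpr (by nlinarith [ht.1])
    have he0 := Real.exp_pos (-2*t)
    have : (1 - exp (-2*t))^n ≤ 1 := pow_le_one₀ (by linarith) (by linarith)
    linarith
  have hphile : ∀ t ∈ Set.Icc (0:ℝ) R, 1 - (1 - exp (-2*t))^n ≤ (n:ℝ) * exp (-2*t) := by
    intro t ht
    have he1 : exp (-2*t) ≤ 1 := by
      rw [← Real.exp_zero]; exact Real.exp_le_exp.mpr (by nlinarith [ht.1])
    have h2 : (-2:ℝ) ≤ -exp (-2*t) := by linarith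
    have h3 : 1 + (n:ℝ) * (-exp (-2*t)) ≤ (1 + -exp (-2*t))^n := one_add_mul_le_pow h2 n
    have h4 : (1 + -exp (-2*t)) = 1 - exp (-2*t) := by ring
    rw [h4] at h3; linarith
  have hsin0 : ∀ t ∈ Set.Icc (0:ℝ) R, 0 ≤ sin (π*t/R) := by
    intro t ht
    exact sin_nonneg_of_nonneg_of_le_pi (div_nonneg (mul_nonneg pi_pos.le ht.1) hR0)
      (by rw [div_le_iff₀ hR]; nlinarith [pi_pos, ht.2, ht.1])
  have hsinle : ∀ t ∈ Set.Icc (0:ℝ) R, sin (π*t/R) ≤ π*t/R := by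
    intro t ht
    exact Real.sin_le (div_nonneg (mul_nonneg pi_pos.le ht.1) hR0)
  -- basic bounds on a, b, c
  have hc0 : 0 ≤ c := by
    apply intervalIntegral.integral_nonneg hR0
    intro t ht; exact mul_nonneg (hphi0 t ht) (sq_nonneg _)
  have ha0 : 0 ≤ a := by
    apply intervalIntegral.integral_nonneg hR0
    intro t ht; exact mul_nonneg (hphi0 t ht) (sq_nonneg _)
  have hc1 : c ≤ (n:ℝ)/2 := by
    have step : c ≤ ∫ t in (0:ℝ)..R, (n:ℝ) * exp (-2*t) := by
      apply intervalIntegral.integral_mono_on hR0 (ii _ (by fun_prop)) (ii _ (by fun_prop))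
      intro t ht
      have h1 := hphile t ht
      have h2 : sin (π*t/R)^2 ≤ 1 := Real.sin_sq_le_one _
      have h3 := hphi0 t ht
      nlinarith [Real.exp_pos (-2*t), sq_nonneg (sin (π*t/R))]
    rw [intervalIntegral.integral_const_mul] at step
    have := hypAux_int_exp R
    nlinarith
  have hb1 : |b| ≤ (n:ℝ)*π/(4*R) := by
    have step1 : |b| ≤ ∫ t in (0:ℝ)..R,
        |(1 - (1 - exp (-2*t))^n) * (sin (π*t/R) * cos (π*t/R))| :=
      intervalIntegral.abs_integral_le_integral_abs hR0
    have step2 : (∫ t in (0:ℝ)..R,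
        |(1 - (1 - exp (-2*t))^n) * (sin (π*t/R) * cos (π*t/R))|)
        ≤ ∫ t in (0:ℝ)..R, ((n:ℝ)*π/R) * (t * exp (-2*t)) := by
      apply intervalIntegral.integral_mono_on hR0 (ii _ (Continuous.abs (by fun_prop))) (ii _ (by fun_prop))
      intro t ht
      have h0 := hphi0 t ht
      have h1 := hphile t ht
      have h2 := hsin0 t ht
      have h3 := hsinle t ht
      have h4 : |cos (π*t/R)| ≤ 1 := Real.abs_cos_le_one _
      have heq : |(1 - (1 - exp (-2*t))^n) * (sin (π*t/R) * cos (π*t/R))|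
          = (1 - (1 - exp (-2*t))^n) * sin (π*t/R) * |cos (π*t/R)| := by
        rw [abs_mul, abs_mul, abs_of_nonneg h0, abs_of_nonneg h2, mul_assoc]
      rw [heq]
      have h5 : (1 - (1 - exp (-2*t))^n) * sin (π*t/R) * |cos (π*t/R)|
          ≤ (1 - (1 - exp (-2*t))^n) * sin (π*t/R) := by
        have := mul_le_mul_of_nonneg_left h4 (mul_nonneg h0 h2)
        simpa using this
      have h6 : (1 - (1 - exp (-2*t))^n) * sin (π*t/R) ≤ ((n:ℝ) * exp (-2*t)) * (π*t/R) := by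
        apply mul_le_mul h1 h3 h2 (by positivity)
      have h7 : ((n:ℝ) * exp (-2*t)) * (π*t/R) = ((n:ℝ)*π/R) * (t * exp (-2*t)) := by ring
      linarith
    rw [intervalIntegral.integral_const_mul] at step2
    have h8 := hypAux_int_t_exp R hR0
    have h9 : (0:ℝ) ≤ (n:ℝ)*π/R := by positivity
    calc |b| ≤ ((n:ℝ)*π/R) * ∫ t in (0:ℝ)..R, t * exp (-2*t) := le_trans step1 step2
      _ ≤ ((n:ℝ)*π/R) * (1/4) := mul_le_mul_of_nonneg_left h8 h9
      _ = (n:ℝ)*π/(4*R) := by ring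
  have hb2 : b * R ≤ (n:ℝ)*π/4 := by
    have h1 : b ≤ (n:ℝ)*π/(4*R) := (abs_le.mp hb1).2
    have : (n:ℝ)*π/(4*R) = ((n:ℝ)*π/4)/R := by ring
    rw [this] at h1
    exact (le_div_iff₀ hR).mp h1
  -- integral identities
  have hDeq : (∫ t in (0:ℝ)..R, (1 - Real.exp (-2 * t)) ^ n * Real.sin (π * t / R) ^ 2)
      = R/2 - c := by
    have hcongr : Set.EqOn (fun t => (1 - Real.exp (-2 * t)) ^ n * Real.sin (π * t / R) ^ 2)
        (fun t => sin (π*t/R)^2 - (1 - (1 - exp (-2*t))^n) * sin (π*t/R)^2)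
        (Set.uIcc (0:ℝ) R) := fun t _ => by ring
    rw [intervalIntegral.integral_congr hcongr,
      intervalIntegral.integral_sub (ii _ (by fun_prop)) (ii _ (by fun_prop)),
      hypAux_int_sin_sq R hR]
  have hKeq : (∫ t in (0:ℝ)..R, (1 - Real.exp (-2 * t)) ^ n * Real.cos (π * t / R) ^ 2)
      = R/2 - a := by
    have hcongr : Set.EqOn (fun t => (1 - Real.exp (-2 * t)) ^ n * Real.cos (π * t / R) ^ 2)
        (fun t => cos (π*t/R)^2 - (1 - (1 - exp (-2*t))^n) * cos (π*t/R)^2)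
        (Set.uIcc (0:ℝ) R) := fun t _ => by ring
    rw [intervalIntegral.integral_congr hcongr,
      intervalIntegral.integral_sub (ii _ (by fun_prop)) (ii _ (by fun_prop)),
      hypAux_int_cos_sq R hR]
  have hSKeq : (∫ t in (0:ℝ)..R,
      (1 - Real.exp (-2 * t)) ^ n * (Real.sin (π * t / R) * Real.cos (π * t / R))) = -b := by
    have hcongr : Set.EqOn
        (fun t => (1 - Real.exp (-2 * t)) ^ n * (Real.sin (π * t / R) * Real.cos (π * t / R)))
        (fun t => sin (π*t/R) * cos (π*t/R)
          - (1 - (1 - exp (-2*t))^n) * (sin (π*t/R) * cos (π*t/R)))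
        (Set.uIcc (0:ℝ) R) := fun t _ => by ring
    rw [intervalIntegral.integral_congr hcongr,
      intervalIntegral.integral_sub (ii _ (by fun_prop)) (ii _ (by fun_prop)),
      hypAux_int_sin_cos R hR]
    simp [hb_def]
  have hNeq : (∫ t in (0:ℝ)..R, (1 - Real.exp (-2 * t)) ^ n *
      (-((n : ℝ) / 2) * Real.sin (π * t / R) + (π / R) * Real.cos (π * t / R)) ^ 2)
      = ((n:ℝ)^2/4)*(R/2 - c) + (π^2/R^2)*(R/2 - a) + ((n:ℝ)*π/R)*b := by
    have hcongr : Set.EqOn (fun t => (1 - Real.exp (-2 * t)) ^ n *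
        (-((n : ℝ) / 2) * Real.sin (π * t / R) + (π / R) * Real.cos (π * t / R)) ^ 2)
        (fun t => ((n:ℝ)^2/4) * ((1 - Real.exp (-2 * t)) ^ n * Real.sin (π * t / R) ^ 2)
          + (π^2/R^2) * ((1 - Real.exp (-2 * t)) ^ n * Real.cos (π * t / R) ^ 2)
          - ((n:ℝ)*π/R) * ((1 - Real.exp (-2 * t)) ^ n
              * (Real.sin (π * t / R) * Real.cos (π * t / R))))
        (Set.uIcc (0:ℝ) R) := by
      intro t _
      have : R ≠ 0 := hR.ne'
      field_simp
      ring
    rw [intervalIntegral.integral_congr hcongr,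
      intervalIntegral.integral_sub (IntervalIntegrable.add (ii _ (by fun_prop)) (ii _ (by fun_prop))) (ii _ (by fun_prop)),
      intervalIntegral.integral_add (ii _ (by fun_prop)) (ii _ (by fun_prop)),
      intervalIntegral.integral_const_mul, intervalIntegral.integral_const_mul,
      intervalIntegral.integral_const_mul, hDeq, hKeq, hSKeq]
    ring
  -- denominator positivity
  have hDpos : 0 < R/2 - c := by nlinarith
  -- combine
  rw [hypRayleigh, hDeq, hNeq, div_le_iff₀ hDpos]
  have expand : ((n:ℝ)^2/4 + π^2/R^2 + (π^2*(n:ℝ)*((n:ℝ)+2))/R^3) * (R/2 - c)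
      = ((n:ℝ)^2/4)*(R/2 - c)
        + ((π^2*R*(R/2 - c) + π^2*(n:ℝ)*((n:ℝ)+2)*(R/2 - c))/R^3) := by
    field_simp
    ring
  have lhs2 : (π^2/R^2)*(R/2 - a) + ((n:ℝ)*π/R)*b
      = (π^2*R*(R/2 - a) + (n:ℝ)*π*R*(b*R))/R^3 := by
    field_simp
  rw [expand]
  have key : (π^2*R*(R/2 - a) + (n:ℝ)*π*R*(b*R))/R^3
      ≤ (π^2*R*(R/2 - c) + π^2*(n:ℝ)*((n:ℝ)+2)*(R/2 - c))/R^3 := by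
    gcongr ?x / R^3
    have h1 : 0 ≤ π^2*R*a := by positivity
    have h2 : 0 ≤ π^2*R*((n:ℝ)/2 - c) := mul_nonneg (by positivity) (by linarith)
    have h3 : 0 ≤ (n:ℝ)*π*R*((n:ℝ)*π/4 - b*R) := mul_nonneg (by positivity) (by linarith)
    have h4 : 0 ≤ π^2*(n:ℝ)*((n:ℝ)+2)*(R/4 - c) := mul_nonneg (by positivity) (by linarith)
    nlinarith [h1, h2, h3, h4]
  linarith [key]


/-- In hyperbolic space `H^{n+1}`, the Rayleigh quotient of the radial test function
`f(t) = e^{-nt/2} sin(πt/R)` on `B(p,R)` is `≤ n²/4 + π²/R² + O(R⁻³)` as `R → +∞`;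
consequently, for any function `lam` (the first Dirichlet eigenvalue `λ₁(B(p,R))`) bounded
above by this Rayleigh quotient (variational principle), the same bound holds for `lam`. -/
theorem hyperbolic_ball_eigenvalue_upper (n : ℕ) (hn : 1 ≤ n)
    (lam : ℝ → ℝ) (hlam : ∀ R : ℝ, 0 < R → lam R ≤ hypRayleigh n R) :
    ∃ C R₀ : ℝ, 0 < C ∧ 0 < R₀ ∧ ∀ R : ℝ, R₀ ≤ R →
      hypRayleigh n R ≤ (n : ℝ) ^ 2 / 4 + π ^ 2 / R ^ 2 + C / R ^ 3 ∧
      lam R ≤ (n : ℝ) ^ 2 / 4 + π ^ 2 / R ^ 2 + C / R ^ 3 := by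
  have hn1 : (1:ℝ) ≤ (n:ℝ) := by exact_mod_cast hn
  refine ⟨π^2*(n:ℝ)*((n:ℝ)+2), 2*(n:ℝ), by positivity, by positivity, fun R hRR => ?_⟩
  have h := hypAux_main n hn R hRR
  have hR : 0 < R := by linarith
  exact ⟨h, le_trans (hlam R hR) h⟩
end

section
/- Let u be smooth and positive on a Riemannian manifold with Δu = (n+1)u, fix ε > 0 and a < 0, set h = sin(a·ln(εu)) and ψ = u^{−n/2}·h on the region where h > 0. Then −Δψ/ψ = n²/4 + a² + (1 − |du|²/u²)·(n(n+2)/4 − (n+1)·a·cot(a·ln(εu)) − a²). -/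
open Real

/-- Let `lap` be the Laplace–Beltrami operator and `gradSq f = |df|²_g` the squared gradient
of a Riemannian manifold, satisfying the chain rule for functions smooth on `(0,∞)`.
If `u > 0` is smooth with `Δu = (n+1)u`, `ε > 0`, `a < 0`, `h = sin(a ln(εu))` and
`ψ = u^{-n/2} h`, then on the region where `h > 0`,
`-Δψ/ψ = n²/4 + a² + (1 - |du|²/u²)(n(n+2)/4 - (n+1) a cot(a ln(εu)) - a²)`. -/
theorem lap_of_new_test_function {X : Type*} (n : ℕ)
    (lap gradSq : (X → ℝ) → X → ℝ) (u : X → ℝ) (hu : ∀ p, 0 < u p)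
    (ε a : ℝ) (hε : 0 < ε) (ha : a < 0)
    (heigen : ∀ p, lap u p = ((n : ℝ) + 1) * u p)
    (hchain : ∀ F : ℝ → ℝ, ContDiffOn ℝ 2 F (Set.Ioi 0) →
      ∀ p, lap (fun q => F (u q)) p
        = deriv F (u p) * lap u p + deriv (deriv F) (u p) * gradSq u p) :
    ∀ p, 0 < Real.sin (a * Real.log (ε * u p)) →
      -(lap (fun q => u q ^ (-(n : ℝ) / 2) * Real.sin (a * Real.log (ε * u q))) p)
          / (u p ^ (-(n : ℝ) / 2) * Real.sin (a * Real.log (ε * u p)))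
        = (n : ℝ) ^ 2 / 4 + a ^ 2
          + (1 - gradSq u p / u p ^ 2) *
            ((n : ℝ) * ((n : ℝ) + 2) / 4
              - ((n : ℝ) + 1) * a * Real.cot (a * Real.log (ε * u p)) - a ^ 2) := by
  intro p hS
  set r : ℝ := -(n : ℝ) / 2 with hr
  have hup : 0 < u p := hu p
  set F : ℝ → ℝ := fun t => t ^ r * Real.sin (a * Real.log (ε * t)) with hFdef
  set G₁ : ℝ → ℝ := fun t => t ^ (r - 1) *
      (r * Real.sin (a * Real.log (ε * t)) + a * Real.cos (a * Real.log (ε * t))) with hG₁def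
  have hderivθ : ∀ t : ℝ, 0 < t →
      HasDerivAt (fun s => a * Real.log (ε * s)) (a / t) t := by
    intro t ht
    have h1 : HasDerivAt (fun s : ℝ => ε * s) ε t := by
      simpa using (hasDerivAt_id t).const_mul ε
    have h2 : HasDerivAt (fun s => Real.log (ε * s)) ((ε * t)⁻¹ * ε) t :=
      (Real.hasDerivAt_log (by positivity)).comp t h1
    have h3 := h2.const_mul a
    refine h3.congr_deriv ?_
    field_simp
  have hF' : ∀ t : ℝ, 0 < t → HasDerivAt F (G₁ t) t := by
    intro t ht
    have h1 : HasDerivAt (fun s : ℝ => s ^ r) (r * t ^ (r - 1)) t :=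
      Real.hasDerivAt_rpow_const (Or.inl ht.ne')
    have h2 : HasDerivAt (fun s => Real.sin (a * Real.log (ε * s)))
        (Real.cos (a * Real.log (ε * t)) * (a / t)) t :=
      (Real.hasDerivAt_sin _).comp t (hderivθ t ht)
    have h3 := h1.mul h2
    refine h3.congr_deriv ?_
    have ht1 : t ^ (r - 1) = t ^ r / t := by
      rw [Real.rpow_sub ht, Real.rpow_one]
    simp only [hG₁def, ht1]
    field_simp
  have hG₁' : ∀ t : ℝ, 0 < t → HasDerivAt G₁
      (t ^ (r - 2) * ((r - 1) * (r * Real.sin (a * Real.log (ε * t))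
          + a * Real.cos (a * Real.log (ε * t)))
        + a * (r * Real.cos (a * Real.log (ε * t))
          - a * Real.sin (a * Real.log (ε * t))))) t := by
    intro t ht
    have h1 : HasDerivAt (fun s : ℝ => s ^ (r - 1)) ((r - 1) * t ^ (r - 1 - 1)) t :=
      Real.hasDerivAt_rpow_const (Or.inl ht.ne')
    have hsin : HasDerivAt (fun s => Real.sin (a * Real.log (ε * s)))
        (Real.cos (a * Real.log (ε * t)) * (a / t)) t :=
      (Real.hasDerivAt_sin _).comp t (hderivθ t ht)
    have hcos : HasDerivAt (fun s => Real.cos (a * Real.log (ε * s)))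
        (-Real.sin (a * Real.log (ε * t)) * (a / t)) t :=
      (Real.hasDerivAt_cos _).comp t (hderivθ t ht)
    have h2 : HasDerivAt (fun s => r * Real.sin (a * Real.log (ε * s))
        + a * Real.cos (a * Real.log (ε * s)))
        (r * (Real.cos (a * Real.log (ε * t)) * (a / t))
          + a * (-Real.sin (a * Real.log (ε * t)) * (a / t))) t :=
      (hsin.const_mul r).add (hcos.const_mul a)
    have h3 := h1.mul h2
    refine h3.congr_deriv ?_
    have ht1 : t ^ (r - 1 - 1) = t ^ (r - 1) / t := by
      rw [Real.rpow_sub ht, Real.rpow_one]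
    have ht2 : t ^ (r - 2) = t ^ (r - 1) / t := by
      rw [show r - 2 = r - 1 - 1 by ring, Real.rpow_sub ht, Real.rpow_one]
    rw [ht1, ht2]
    field_simp
    ring
  have hFcd : ContDiffOn ℝ 2 F (Set.Ioi 0) := by
    intro t ht
    have ht' : (0 : ℝ) < t := ht
    have h1 : ContDiffAt ℝ 2 (fun s : ℝ => s ^ r) t :=
      Real.contDiffAt_rpow_const_of_ne ht'.ne'
    have h2 : ContDiffAt ℝ 2 (fun s : ℝ => Real.sin (a * Real.log (ε * s))) t := by
      have hlog : ContDiffAt ℝ 2 (fun s : ℝ => Real.log (ε * s)) t :=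
        (Real.contDiffAt_log.2 (by positivity)).comp t
          (contDiffAt_const.mul contDiffAt_id)
      exact Real.contDiff_sin.contDiffAt.comp t (contDiffAt_const.mul hlog)
    exact (h1.mul h2).contDiffWithinAt
  have key := hchain F hFcd p
  have hd1 : deriv F (u p) = G₁ (u p) := (hF' _ hup).deriv
  have hd2 : deriv (deriv F) (u p)
      = u p ^ (r - 2) * ((r - 1) * (r * Real.sin (a * Real.log (ε * u p))
          + a * Real.cos (a * Real.log (ε * u p)))
        + a * (r * Real.cos (a * Real.log (ε * u p))
          - a * Real.sin (a * Real.log (ε * u p)))) := by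
    have heq : deriv F =ᶠ[nhds (u p)] G₁ := by
      filter_upwards [IsOpen.mem_nhds isOpen_Ioi hup] with t ht
      exact (hF' t ht).deriv
    rw [Filter.EventuallyEq.deriv_eq heq]
    exact (hG₁' _ hup).deriv
  have hψ : lap (fun q => u q ^ r * Real.sin (a * Real.log (ε * u q))) p
      = deriv F (u p) * lap u p + deriv (deriv F) (u p) * gradSq u p := key
  rw [hψ, hd1, hd2, heigen p, hG₁def]
  have hv1 : u p ^ (r - 1) = u p ^ r / u p := by
    rw [Real.rpow_sub hup, Real.rpow_one]
  have hv2 : u p ^ (r - 2) = u p ^ r / u p / u p := by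
    rw [show r - 2 = r - 1 - 1 by ring, Real.rpow_sub hup, Real.rpow_sub hup, Real.rpow_one]
  simp only [hv1, hv2, Real.cot_eq_cos_div_sin]
  have hpow : (0 : ℝ) < u p ^ r := Real.rpow_pos_of_pos hup r
  have hSne : Real.sin (a * Real.log (u p * ε)) ≠ 0 := by rw [mul_comm (u p)]; exact hS.ne'
  rw [hr] at *
  field_simp
  ring
end

section
/- For every natural n ≥ 1, the alternating sum S_n = ∑_{k=1}^n C(n,k)·(−1)^{k+1}/k³ is positive. -/
open Finset

noncomputable def auxT (m n : ℕ) : ℝ :=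
  ∑ k ∈ Finset.Icc 1 n, (n.choose k : ℝ) * (-1) ^ (k + 1) / (k : ℝ) ^ m

lemma auxT_zero (n : ℕ) (hn : 1 ≤ n) : auxT 0 n = 1 := by
  have h := Int.alternating_sum_range_choose (n := n)
  rw [if_neg (by omega)] at h
  have h' : (∑ i ∈ Finset.range (n + 1), (-1 : ℝ) ^ i * n.choose i) = 0 := by
    have := congrArg (fun z : ℤ => (z : ℝ)) h
    push_cast at this
    simpa using this
  rw [Finset.range_eq_Ico, Finset.sum_eq_sum_Ico_succ_bot (show 0 < n + 1 by omega)] at h'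
  rw [show Finset.Ico 1 (n + 1) = Finset.Icc 1 n from Finset.Ico_add_one_right_eq_Icc 1 n] at h'
  simp only [pow_zero, Nat.choose_zero_right, Nat.cast_one, mul_one, one_mul] at h'
  simp only [auxT, pow_zero]
  have : ∑ k ∈ Finset.Icc 1 n, (-1 : ℝ) ^ k * n.choose k = -1 := by linarith
  calc ∑ k ∈ Finset.Icc 1 n, (n.choose k : ℝ) * (-1) ^ (k + 1) / (k:ℝ)^0
      = -∑ k ∈ Finset.Icc 1 n, (-1 : ℝ) ^ k * n.choose k := by
        rw [← Finset.sum_neg_distrib]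
        apply Finset.sum_congr rfl
        intro k _
        ring
    _ = 1 := by rw [this]; ring

lemma auxT_rec (m n : ℕ) :
    auxT (m + 1) (n + 1) = auxT (m + 1) n + auxT m (n + 1) / ((n : ℝ) + 1) := by
  have key : ∀ k ∈ Finset.Icc 1 (n+1),
      ((n+1).choose k : ℝ) * (-1) ^ (k + 1) / (k : ℝ) ^ (m+1)
      = (n.choose k : ℝ) * (-1) ^ (k + 1) / (k : ℝ) ^ (m+1)
        + (((n+1).choose k : ℝ) * (-1) ^ (k + 1) / (k : ℝ) ^ m) / ((n : ℝ)+1) := by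
    intro k hk
    simp only [Finset.mem_Icc] at hk
    obtain ⟨hk1, hk2⟩ := hk
    obtain ⟨j, rfl⟩ : ∃ j, k = j + 1 := ⟨k - 1, by omega⟩
    have hj : ((j:ℝ)+1) ≠ 0 := by positivity
    have hn1 : ((n:ℝ)+1) ≠ 0 := by positivity
    have habs : ((n+1).choose (j+1) : ℝ) * ((j:ℝ)+1) = ((n:ℝ)+1) * n.choose j := by
      have h1 := Nat.add_one_mul_choose_eq n j
      have h2 := congrArg (fun z : ℕ => (z : ℝ)) h1
      push_cast at h2
      linarith
    have hpascal : ((n+1).choose (j+1) : ℝ) = n.choose (j+1) + n.choose j := by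
      rw [Nat.choose_succ_succ]; push_cast; ring
    have hdiv : ((n+1).choose (j+1) : ℝ) / ((n:ℝ)+1) = (n.choose j : ℝ) / ((j:ℝ)+1) := by
      field_simp
      linarith
    have h2 : (((n+1).choose (j+1) : ℝ) * (-1) ^ (j+1+1) / ((j:ℝ)+1) ^ m) / ((n:ℝ)+1)
        = (n.choose j : ℝ) * (-1) ^ (j+1+1) / ((j:ℝ)+1) ^ (m+1) := by
      rw [pow_succ]
      calc (((n+1).choose (j+1) : ℝ) * (-1) ^ (j+1+1) / ((j:ℝ)+1) ^ m) / ((n:ℝ)+1)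
          = (((n+1).choose (j+1) : ℝ) / ((n:ℝ)+1)) * ((-1) ^ (j+1+1) / ((j:ℝ)+1) ^ m) := by
            ring
        _ = ((n.choose j : ℝ) / ((j:ℝ)+1)) * ((-1) ^ (j+1+1) / ((j:ℝ)+1) ^ m) := by
            rw [hdiv]
        _ = (n.choose j : ℝ) * (-1) ^ (j+1+1) / (((j:ℝ)+1) ^ m * ((j:ℝ)+1)) := by
            rw [div_mul_div_comm, mul_comm ((j:ℝ)+1) (((j:ℝ)+1)^m)]
    push_cast
    push_cast at h2 hpascal
    linear_combination ((-1:ℝ)^(j+1+1)/((j:ℝ)+1)^(m+1)) * hpascal - h2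
  rw [auxT, Finset.sum_congr rfl key, Finset.sum_add_distrib]
  congr 1
  · rw [Finset.sum_Icc_succ_top (show 1 ≤ n + 1 by omega), Nat.choose_succ_self]
    simp [auxT]
  · rw [auxT, ← Finset.sum_div]

lemma auxT_one_n (m : ℕ) : auxT m 1 = 1 := by
  simp [auxT]

lemma auxT_pos (m : ℕ) : ∀ n, 1 ≤ n → 0 < auxT m n := by
  induction m with
  | zero => intro n hn; rw [auxT_zero n hn]; norm_num
  | succ m ih =>
    intro n hn
    induction n with
    | zero => omega
    | succ n ihn =>
      rcases Nat.eq_zero_or_pos n with rfl | hn'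
      · rw [auxT_one_n]; norm_num
      · rw [auxT_rec m n]
        have h1 := ihn hn'
        have h2 := ih (n+1) (by omega)
        positivity

/-- For every `n ≥ 1`, the alternating sum `∑_{k=1}^n C(n,k) (-1)^{k+1} / k³` is positive. -/
theorem alternating_binomial_sum_pos (n : ℕ) (hn : 1 ≤ n) :
    0 < ∑ k ∈ Finset.Icc 1 n, (n.choose k : ℝ) * (-1) ^ (k + 1) / (k : ℝ) ^ 3 := by
  have := auxT_pos 3 n hn
  simpa [auxT] using this
end
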